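/- Let P ∈ [0,1]^{d×d} be a row-stochastic matrix (a d-state Markov chain) and let I ∈ [0,1]^d be a probability row vector (an initial distribution). Then there exist a positive integer T dividing lcm(1, 2, …, d) (hence bounded by an exponential in d) and vectors π^(0), …, π^(T−1) ∈ [0,1]^d such that for every k ∈ {0, …, T−1}, lim_{n→∞} I·P^k·(P^T)^n = π^(k). Moreover, for each state q, π^(k)(q) is non-zero if and only if both: (1) q lies in a bottom strongly connected component of the digraph G_P with an edge p → q whenever P(p,q) > 0, and (2) there is a path in G_P of length k + T·ℓ, for some ℓ ≤ d, from some state p with I(p) > 0 to q. -/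

import Mathlib

open scoped BigOperators

/-- A nondeterministic finite automaton over alphabet `σ` with states `Q`:
an initial state, a finite set of transitions and a finite set of accepting states. -/
structure NFA' (σ Q : Type) where
  init : Q
  trans : Finset (Q × σ × Q)
  accept : Finset Q

namespace NFA'

variable {σ Q : Type}

/-- `IsRun Δ p w ts r`: `ts` is a run on the word `w` from state `p` to state `r`,
using transitions from `Δ`. -/
inductive IsRun (Δ : Finset (Q × σ × Q)) : Q → List σ → List (Q × σ × Q) → Q → Prop
  | nil (q : Q) : IsRun Δ q [] [] q
  | cons {p : Q} {a : σ} {q r : Q} {w : List σ} {ts : List (Q × σ × Q)} :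
      (p, a, q) ∈ Δ → IsRun Δ q w ts r → IsRun Δ p (a :: w) ((p, a, q) :: ts) r

/-- `ts` is an accepting run of `A` on `w`. -/
def AccRun (A : NFA' σ Q) (w : List σ) (ts : List (Q × σ × Q)) : Prop :=
  ∃ r ∈ A.accept, IsRun A.trans A.init w ts r

/-- The language of `A`: words admitting an accepting run. -/
def lang (A : NFA' σ Q) : Set (List σ) := {w | ∃ ts, A.AccRun w ts}

/-- `δ(q, u)`: the set of states reachable from `q` by a run on `u`. -/
def reach (A : NFA' σ Q) (q : Q) (u : List σ) : Set Q :=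
  {r | ∃ ts, IsRun A.trans q u ts r}

/-- The word `u` admits an accepting run from the state `q`. -/
def AccFrom (A : NFA' σ Q) (q : Q) (u : List σ) : Prop :=
  ∃ r ∈ A.accept, ∃ ts, IsRun A.trans q u ts r

/-- `A_S`: the automaton `A` with transitions restricted to `S`. -/
def restrict (A : NFA' σ Q) (S : Finset (Q × σ × Q)) : NFA' σ Q :=
  { A with trans := S }

/-- `A` is `k`-ambiguous: every word has at most `k` accepting runs. -/
def kAmbiguous (A : NFA' σ Q) (k : ℕ) : Prop :=
  ∀ w, {ts | A.AccRun w ts}.encard ≤ (k : ℕ∞)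

/-- `A` is finitely-ambiguous. -/
def FinitelyAmbiguous (A : NFA' σ Q) : Prop := ∃ k : ℕ, 0 < k ∧ A.kAmbiguous k

/-- A memoryless stochastic resolver for `A`: probabilities, supported on the transitions
of `A`, summing to one over the outgoing transitions of every pair `(p, a)` that has at
least one outgoing transition (implicitly, `A` is completed with a non-accepting sink). -/
structure Resolver (A : NFA' σ Q) where
  r : Q × σ × Q → ℝ
  nonneg : ∀ t, 0 ≤ r t
  le_one : ∀ t, r t ≤ 1
  supp : ∀ t, r t ≠ 0 → t ∈ A.trans
  sum_one : ∀ p a, (∃ q, (p, a, q) ∈ A.trans) →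
      ∑ t ∈ A.trans, {t : Q × σ × Q | t.1 = p ∧ t.2.1 = a}.indicator r t = 1

/-- The probability of a run: the product of the probabilities of its transitions. -/
def runProb (f : Q × σ × Q → ℝ) (ts : List (Q × σ × Q)) : ℝ := (ts.map f).prod

/-- The acceptance probability of a word: the sum, over all accepting runs, of the
product of the transition probabilities along the run. -/
noncomputable def accProb (A : NFA' σ Q) (f : Q × σ × Q → ℝ) (w : List σ) : ℝ :=
  ∑ᶠ ts ∈ {ts | A.AccRun w ts}, runProb f ts

/-- `A` is `λ`-memoryless-stochastically-resolvable. -/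
def Resolvable (A : NFA' σ Q) (lam : ℝ) : Prop :=
  ∃ R : A.Resolver, {w | lam ≤ A.accProb R.r w} = A.lang

/-- `A` is positively (memoryless stochastically) resolvable. -/
def PositivelyResolvable (A : NFA' σ Q) : Prop :=
  ∃ lam : ℝ, 0 < lam ∧ A.Resolvable lam

/-- The support `S` is bad: no resolver whose support is exactly `S` witnesses
positive resolvability. -/
def BadSupport (A : NFA' σ Q) (S : Finset (Q × σ × Q)) : Prop :=
  ∀ R : A.Resolver, (∀ t, R.r t ≠ 0 ↔ t ∈ S) →
    ∀ lam : ℝ, 0 < lam → {w | lam ≤ A.accProb R.r w} ≠ A.lang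

/-- A transition is nondeterministic in `S`. -/
def NondetIn (S : Finset (Q × σ × Q)) (t : Q × σ × Q) : Prop :=
  t ∈ S ∧ ∃ q', q' ≠ t.2.2 ∧ (t.1, t.2.1, q') ∈ S

/-- The number of transitions of a run that are nondeterministic in `S`. -/
noncomputable def nondetCount (S : Finset (Q × σ × Q)) (ts : List (Q × σ × Q)) : ℕ :=
  (ts.map (Set.indicator {t | NondetIn S t} (fun _ => 1))).sum

/-- `b(w)`: the minimal number of `S`-nondeterministic transitions over all accepting
runs of `w` in `A_S`. -/
noncomputable def minNondet (A : NFA' σ Q) (S : Finset (Q × σ × Q)) (w : List σ) : ℕ :=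
  sInf {m | ∃ ts, (A.restrict S).AccRun w ts ∧ nondetCount S ts = m}

/-- The state of a run `ts` (started in `q0`) after `n` transitions. -/
def stateAt (q0 : Q) (ts : List (Q × σ × Q)) (n : ℕ) : Q :=
  match (ts.take n).getLast? with
  | some t => t.2.2
  | none => q0

/-- `Θ` makes `A` into a probabilistic finite automaton (PFA) based on `A`. -/
def IsPFA (A : NFA' σ Q) (Θ : Q × σ × Q → ℝ) : Prop :=
  (∀ t ∈ A.trans, 0 < Θ t ∧ Θ t ≤ 1) ∧ (∀ t, t ∉ A.trans → Θ t = 0) ∧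
  ∀ p a, (∃ q, (p, a, q) ∈ A.trans) →
    ∑ t ∈ A.trans, {t : Q × σ × Q | t.1 = p ∧ t.2.1 = a}.indicator Θ t = 1

/-- The PFA is simple: every transition has probability `1/2` or `1`. -/
def IsSimple (A : NFA' σ Q) (Θ : Q × σ × Q → ℝ) : Prop :=
  ∀ t ∈ A.trans, Θ t = 1/2 ∨ Θ t = 1

end NFA'

/-- `pathLen E n p q`: there is a path of length `n` from `p` to `q` along edges `E`. -/
def pathLen {α : Type} (E : α → α → Prop) : ℕ → α → α → Prop
  | 0 => fun p q => p = q
  | (n + 1) => fun p q => ∃ r, E p r ∧ pathLen E n r q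

namespace MCAux

variable {α : Type} {R : α → α → Prop}

lemma pathLen_trans : ∀ {m n : ℕ} {p q r : α}, pathLen R m p q → pathLen R n q r →
    pathLen R (m + n) p r := by
  intro m
  induction m with
  | zero => intro n p q r h h'; cases h; simpa using h'
  | succ m ih =>
    intro n p q r h h'
    obtain ⟨s, hs, hp⟩ := h
    have e : m + 1 + n = (m + n) + 1 := by omega
    rw [e]
    exact ⟨s, hs, ih hp h'⟩

lemma pathLen_split : ∀ {m n : ℕ} {p r : α}, pathLen R (m + n) p r →
    ∃ q, pathLen R m p q ∧ pathLen R n q r := by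
  intro m
  induction m with
  | zero => intro n p r h; exact ⟨p, rfl, by simpa using h⟩
  | succ m ih =>
    intro n p r h
    rw [Nat.succ_add] at h
    obtain ⟨s, hs, hp⟩ := h
    obtain ⟨q, h1, h2⟩ := ih hp
    exact ⟨q, ⟨s, hs, h1⟩, h2⟩

lemma pathLen_single {p q : α} (h : R p q) : pathLen R 1 p q := ⟨q, h, rfl⟩

lemma pathLen_rtg : ∀ {n : ℕ} {p q : α}, pathLen R n p q → Relation.ReflTransGen R p q := by
  intro n
  induction n with
  | zero => intro p q h; cases h; rfl
  | succ n ih =>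
    intro p q h
    obtain ⟨r, hr, hp⟩ := h
    exact Relation.ReflTransGen.head hr (ih hp)

lemma rtg_iff_pathLen {p q : α} : Relation.ReflTransGen R p q ↔ ∃ n, pathLen R n p q := by
  constructor
  · intro h
    induction h with
    | refl => exact ⟨0, rfl⟩
    | tail _ hbc ih =>
      obtain ⟨n, hn⟩ := ih
      exact ⟨n + 1, pathLen_trans hn (pathLen_single hbc)⟩
  · rintro ⟨n, hn⟩; exact pathLen_rtg hn

lemma pathLen_pad {n : ℕ} {p q : α} (h : pathLen R n p q) (hq : R q q) (j : ℕ) :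
    pathLen R (n + j) p q := by
  induction j with
  | zero => exact h
  | succ j ih => exact pathLen_trans (n := 1) ih (pathLen_single hq)

lemma pathLen_cycle_mul {c : ℕ} {q : α} (h : pathLen R c q q) (k : ℕ) :
    pathLen R (c * k) q q := by
  induction k with
  | zero => rfl
  | succ k ih => rw [Nat.mul_succ]; exact pathLen_trans ih h

lemma pathLen_iff_fn : ∀ {n : ℕ} {p q : α}, pathLen R n p q ↔
    ∃ g : ℕ → α, g 0 = p ∧ g n = q ∧ ∀ i < n, R (g i) (g (i + 1)) := by
  intro n
  induction n with
  | zero =>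
    intro p q
    constructor
    · intro h; cases h; exact ⟨fun _ => p, rfl, rfl, by omega⟩
    · rintro ⟨g, h0, hn, _⟩; rw [← h0, hn]; rfl
  | succ n ih =>
    intro p q
    constructor
    · rintro ⟨r, hr, hp⟩
      obtain ⟨g, h0, hn, hE⟩ := ih.1 hp
      refine ⟨fun i => match i with | 0 => p | (j + 1) => g j, rfl, hn, ?_⟩
      intro i hi
      match i with
      | 0 => simpa [h0] using hr
      | (j + 1) => exact hE j (by omega)
    · rintro ⟨g, h0, hn, hE⟩
      refine ⟨g 1, by rw [← h0]; exact hE 0 (by omega), ?_⟩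
      exact ih.2 ⟨fun i => g (i + 1), rfl, hn, fun i hi => hE (i + 1) (by omega)⟩

lemma pathLen_shorten [Fintype α] {n : ℕ} {p q : α} (h : pathLen R n p q)
    (hn : Fintype.card α ≤ n) : ∃ m < n, pathLen R m p q := by
  obtain ⟨g, h0, hend, hE⟩ := pathLen_iff_fn.1 h
  obtain ⟨i, j, hij, hgij⟩ := Fintype.exists_ne_map_eq_of_card_lt
    (fun i : Fin (n + 1) => g i) (by simpa using Nat.lt_succ_of_le hn)
  wlog hlt : (i : ℕ) < (j : ℕ) generalizing i j
  · exact this j i hij.symm hgij.symm (by omega)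
  have hjn : (j : ℕ) ≤ n := by omega
  set c := (j : ℕ) - (i : ℕ) with hc
  have hc0 : 0 < c := by omega
  refine ⟨n - c, by omega, ?_⟩
  apply pathLen_iff_fn.2
  refine ⟨fun m => if m < (i : ℕ) then g m else g (m + c), ?_, ?_, ?_⟩
  · by_cases h0i : 0 < (i : ℕ)
    · simp [h0i, h0]
    · have : (i : ℕ) = 0 := by omega
      simp only [this, Nat.lt_irrefl, if_false, Nat.zero_add, ← h0]
      rw [show c = (j : ℕ) by omega]
      rw [this] at hgij
      exact hgij.symm
  · have : ¬ (n - c < (i : ℕ)) := by omega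
    simp only [this, if_false]
    rw [show n - c + c = n by omega, hend]
  · intro m hm
    by_cases h1 : m + 1 ≤ (i : ℕ)
    · have hmi : m < (i : ℕ) := by omega
      by_cases h2 : m + 1 < (i : ℕ)
      · simpa [hmi, h2] using hE m (by omega)
      · have he : m + 1 = (i : ℕ) := by omega
        simp only [hmi, if_true, h2, if_false]
        have : g (m + 1 + c) = g (m + 1) := by
          rw [show m + 1 + c = (j : ℕ) by omega, he]; exact hgij.symm
        rw [this]; exact hE m (by omega)
    · have hmi : ¬ (m < (i : ℕ)) := by omega
      have : ¬ (m + 1 < (i : ℕ)) := by omega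
      simp only [hmi, this, if_false]
      rw [show m + 1 + c = (m + c) + 1 by omega]
      exact hE (m + c) (by omega)

lemma reach_bound [Fintype α] {p q : α} (h : Relation.ReflTransGen R p q) :
    ∃ n < Fintype.card α, pathLen R n p q := by
  obtain ⟨n, hn⟩ := rtg_iff_pathLen.1 h
  induction n using Nat.strong_induction_on with
  | _ n ih =>
    by_cases hc : n < Fintype.card α
    · exact ⟨n, hc, hn⟩
    · obtain ⟨m, hm, hp⟩ := pathLen_shorten hn (by omega)
      exact ih m hm hp


section Matrices

variable {d : ℕ} {P : Matrix (Fin d) (Fin d) ℝ}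

lemma sum_pos_iff {β : Type*} {s : Finset β} {f : β → ℝ} (h : ∀ i ∈ s, 0 ≤ f i) :
    0 < ∑ i ∈ s, f i ↔ ∃ i ∈ s, 0 < f i := by
  constructor
  · intro hs
    by_contra hc
    push_neg at hc
    have : ∑ i ∈ s, f i = 0 := Finset.sum_eq_zero fun i hi => le_antisymm (hc i hi) (h i hi)
    linarith
  · rintro ⟨i, hi, hfi⟩
    exact Finset.sum_pos' h ⟨i, hi, hfi⟩

variable (hP0 : ∀ i j, 0 ≤ P i j) (hP1 : ∀ i, ∑ j, P i j = 1)

include hP0 in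
lemma pow_entry_nonneg : ∀ (n : ℕ) (i j), 0 ≤ (P ^ n) i j := by
  intro n
  induction n with
  | zero => intro i j; by_cases h : i = j <;> simp [Matrix.one_apply, h]
  | succ n ih =>
    intro i j
    rw [pow_succ, Matrix.mul_apply]
    exact Finset.sum_nonneg fun r _ => mul_nonneg (ih i r) (hP0 r j)

include hP1 in
lemma pow_row_sum : ∀ (n : ℕ) (i), ∑ j, (P ^ n) i j = 1 := by
  intro n
  induction n with
  | zero => intro i; simp [Matrix.one_apply]
  | succ n ih =>
    intro i
    calc ∑ j, (P ^ (n + 1)) i j = ∑ j, ∑ r, (P ^ n) i r * P r j := by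
          simp [pow_succ, Matrix.mul_apply]
      _ = ∑ r, (P ^ n) i r * ∑ j, P r j := by
          rw [Finset.sum_comm]; simp [Finset.mul_sum]
      _ = 1 := by simp [hP1, ih]

include hP0 in
lemma pow_pos_iff : ∀ (n : ℕ) (p q), 0 < (P ^ n) p q ↔ pathLen (fun i j => 0 < P i j) n p q := by
  intro n
  induction n with
  | zero =>
    intro p q
    by_cases h : p = q <;> simp [Matrix.one_apply, h, pathLen]
  | succ n ih =>
    intro p q
    rw [pow_succ', Matrix.mul_apply]
    rw [sum_pos_iff (fun r _ => mul_nonneg (hP0 p r) (pow_entry_nonneg hP0 n r q))]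
    show _ ↔ ∃ r, 0 < P p r ∧ pathLen _ n r q
    constructor
    · rintro ⟨r, -, hr⟩
      have h1 : 0 < P p r := by
        by_contra hc
        push_neg at hc
        have := hP0 p r
        nlinarith [pow_entry_nonneg hP0 (P := P) n r q]
      exact ⟨r, h1, (ih r q).1 (by nlinarith [hP0 p r])⟩
    · rintro ⟨r, h1, h2⟩
      exact ⟨r, Finset.mem_univ r, mul_pos h1 ((ih r q).2 h2)⟩

end Matrices


section Graph

lemma lcm_pos : ∀ (s : Finset ℕ), (∀ x ∈ s, x ≠ 0) → s.lcm id ≠ 0 := by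
  intro s
  induction s using Finset.induction with
  | empty => simp
  | insert _ _ hx ih =>
    intro h
    rw [Finset.lcm_insert]
    simp only [id]
    exact Nat.lcm_ne_zero (h _ (Finset.mem_insert_self _ _))
      (ih fun x hx => h x (Finset.mem_insert_of_mem hx))

variable {d : ℕ} {P : Matrix (Fin d) (Fin d) ℝ}

variable (P) in
/-- The support relation of `P`. -/
def Erel : Fin d → Fin d → Prop := fun i j => 0 < P i j

variable (P) in
/-- Recurrent states. -/
def RecSt : Fin d → Prop := fun q =>
  ∀ r, Relation.ReflTransGen (Erel P) q r → Relation.ReflTransGen (Erel P) r q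

variable (d) in
/-- The common period multiple. -/
def Tper : ℕ := (Finset.Icc 1 d).lcm id

lemma Tper_pos : 0 < Tper d := by
  rcases Nat.eq_zero_or_pos (Tper d) with h | h
  · exact absurd h (lcm_pos _ (fun x hx => by simp [Finset.mem_Icc] at hx; omega))
  · exact h

lemma dvd_Tper {c : ℕ} (h1 : 0 < c) (h2 : c ≤ d) : c ∣ Tper d :=
  Finset.dvd_lcm (by simp [Finset.mem_Icc]; omega)

variable (hP0 : ∀ i j, 0 ≤ P i j) (hP1 : ∀ i, ∑ j, P i j = 1)

include hP0 hP1 in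
lemma out_edge (p : Fin d) : ∃ q, Erel P p q := by
  have h : 0 < ∑ j, P p j := by rw [hP1 p]; norm_num
  obtain ⟨q, -, hq⟩ := (sum_pos_iff fun j _ => hP0 p j).1 h
  exact ⟨q, hq⟩

lemma rec_closed {q r : Fin d} (hq : RecSt P q) (h : Relation.ReflTransGen (Erel P) q r) :
    RecSt P r := by
  intro s hs
  exact ((hq s (h.trans hs)).trans h)

lemma exists_rec (p : Fin d) : ∃ q, RecSt P q ∧ Relation.ReflTransGen (Erel P) p q := by
  classical
  have key : ∀ (n : ℕ) (p : Fin d),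
      (Finset.univ.filter fun s => Relation.ReflTransGen (Erel P) p s).card ≤ n →
      ∃ q, RecSt P q ∧ Relation.ReflTransGen (Erel P) p q := by
    intro n
    induction n with
    | zero =>
      intro p hp
      exfalso
      have : p ∈ Finset.univ.filter fun s => Relation.ReflTransGen (Erel P) p s := by
        simp [Relation.ReflTransGen.refl]
      have := Finset.card_pos.2 ⟨p, this⟩
      omega
    | succ n ih =>
      intro p hp
      by_cases hrec : RecSt P p
      · exact ⟨p, hrec, Relation.ReflTransGen.refl⟩
      · simp only [RecSt] at hrec
        push_neg at hrec
        obtain ⟨r, hpr, hnrp⟩ := hrec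
        have hsub : (Finset.univ.filter fun s => Relation.ReflTransGen (Erel P) r s) ⊂
            Finset.univ.filter fun s => Relation.ReflTransGen (Erel P) p s := by
          refine Finset.ssubset_iff_of_subset ?_ |>.2 ?_
          · intro s hs
            simp only [Finset.mem_filter, Finset.mem_univ, true_and] at hs ⊢
            exact hpr.trans hs
          · exact ⟨p, by simp [Relation.ReflTransGen.refl], by simpa using hnrp⟩
        obtain ⟨q, h1, h2⟩ := ih r (by have := Finset.card_lt_card hsub; omega)
        exact ⟨q, h1, hpr.trans h2⟩
  exact key _ p le_rfl
end Graph


section Graph2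

variable {d : ℕ} {P : Matrix (Fin d) (Fin d) ℝ}
variable (hP0 : ∀ i j, 0 ≤ P i j) (hP1 : ∀ i, ∑ j, P i j = 1)

include hP0 hP1 in
lemma rec_loopT {q : Fin d} (hq : RecSt P q) : pathLen (Erel P) (Tper d) q q := by
  obtain ⟨r, hr⟩ := out_edge hP0 hP1 q
  have hrq : Relation.ReflTransGen (Erel P) r q :=
    hq r (Relation.ReflTransGen.single hr)
  obtain ⟨n, hn, hpath⟩ := reach_bound hrq
  rw [Fintype.card_fin] at hn
  have hcyc : pathLen (Erel P) (1 + n) q q := pathLen_trans (pathLen_single hr) hpath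
  have hdvd : (1 + n) ∣ Tper d := dvd_Tper (by omega) (by omega)
  have := pathLen_cycle_mul hcyc (Tper d / (1 + n))
  rwa [Nat.mul_div_cancel' hdvd] at this

variable (P) in
/-- The support relation of `P ^ T`. -/
def Frel : Fin d → Fin d → Prop := fun q r => pathLen (Erel P) (Tper d) q r

lemma pathF_iff : ∀ {m : ℕ} {p q : Fin d},
    pathLen (Frel P) m p q ↔ pathLen (Erel P) (Tper d * m) p q := by
  intro m
  induction m with
  | zero => intro p q; simp [pathLen]
  | succ m ih =>
    intro p q
    constructor
    · rintro ⟨r, hr, hp⟩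
      rw [Nat.mul_succ, Nat.add_comm]
      exact pathLen_trans hr (ih.1 hp)
    · intro h
      rw [Nat.mul_succ, Nat.add_comm] at h
      obtain ⟨r, h1, h2⟩ := pathLen_split h
      exact ⟨r, h1, ih.2 h2⟩

lemma frel_rtg {p q : Fin d} (h : Relation.ReflTransGen (Frel P) p q) :
    Relation.ReflTransGen (Erel P) p q := by
  obtain ⟨m, hm⟩ := rtg_iff_pathLen.1 h
  exact pathLen_rtg (pathF_iff.1 hm)

include hP0 hP1 in
lemma rec_F_sym {q r : Fin d} (hq : RecSt P q) (h : Relation.ReflTransGen (Frel P) q r) :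
    RecSt P r ∧ Relation.ReflTransGen (Frel P) r q := by
  have hqr : Relation.ReflTransGen (Erel P) q r := frel_rtg h
  have hrrec : RecSt P r := rec_closed hq hqr
  obtain ⟨m, hm⟩ := rtg_iff_pathLen.1 h
  have hm' : pathLen (Erel P) (Tper d * m) q r := pathF_iff.1 hm
  obtain ⟨n, hn, hnp⟩ := reach_bound (hq r hqr)
  -- closed walk at q of length T*m + n
  have hcyc : pathLen (Erel P) (Tper d * m + n) q q := pathLen_trans hm' hnp
  -- r → q of length n + (T-1)*(T*m+n) = T*((T-1)*m + n)
  have hwalk : pathLen (Erel P) (n + (Tper d * m + n) * (Tper d - 1)) r q := by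
    have := pathLen_cycle_mul hcyc (Tper d - 1)
    exact pathLen_trans hnp this
  have hT := Tper_pos (d := d)
  have heq : n + (Tper d * m + n) * (Tper d - 1) = Tper d * ((Tper d - 1) * m + n) := by
    obtain ⟨t, ht⟩ := Nat.exists_eq_succ_of_ne_zero hT.ne'
    simp only [ht, Nat.succ_sub_one, Nat.succ_eq_add_one]
    ring
  rw [heq] at hwalk
  exact ⟨hrrec, pathLen_rtg (pathF_iff.2 hwalk)⟩
end Graph2


section Classes

variable {d : ℕ} {P : Matrix (Fin d) (Fin d) ℝ}
variable (hP0 : ∀ i j, 0 ≤ P i j) (hP1 : ∀ i, ∑ j, P i j = 1)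

open scoped Classical in
variable (P) in
/-- The `P^T`-class of `q`. -/
noncomputable def Dcl (q : Fin d) : Finset (Fin d) :=
  Finset.univ.filter fun r => Relation.ReflTransGen (Frel P) q r

lemma mem_Dcl {q r : Fin d} : r ∈ Dcl P q ↔ Relation.ReflTransGen (Frel P) q r := by
  classical
  simp [Dcl]

lemma self_mem_Dcl {q : Fin d} : q ∈ Dcl P q := mem_Dcl.2 Relation.ReflTransGen.refl

lemma Dcl_rec {q r : Fin d} (hq : RecSt P q) (hr : r ∈ Dcl P q) : RecSt P r :=
  rec_closed hq (frel_rtg (mem_Dcl.1 hr))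

include hP0 hP1 in
lemma Dcl_conn {q r s : Fin d} (hq : RecSt P q) (hr : r ∈ Dcl P q) (hs : s ∈ Dcl P q) :
    Relation.ReflTransGen (Frel P) r s :=
  ((rec_F_sym hP0 hP1 hq (mem_Dcl.1 hr)).2).trans (mem_Dcl.1 hs)

lemma Dcl_closed {q r s : Fin d} (hr : r ∈ Dcl P q) (hs : Relation.ReflTransGen (Frel P) r s) :
    s ∈ Dcl P q := mem_Dcl.2 ((mem_Dcl.1 hr).trans hs)

include hP0 hP1 in
lemma Dcl_self_loop {q r : Fin d} (hq : RecSt P q) (hr : r ∈ Dcl P q) : Frel P r r :=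
  rec_loopT hP0 hP1 (Dcl_rec hq hr)

include hP0 in
lemma Qpow_pos_iff {m : ℕ} {p q : Fin d} :
    0 < ((P ^ Tper d) ^ m) p q ↔ pathLen (Frel P) m p q := by
  rw [← pow_mul, pow_pos_iff hP0]
  exact pathF_iff.symm

include hP0 in
lemma Qpow_zero_outside {q r s : Fin d} {m : ℕ} (hr : r ∈ Dcl P q) (hs : s ∉ Dcl P q) :
    ((P ^ Tper d) ^ m) r s = 0 := by
  by_contra h
  have h0 := pow_entry_nonneg (pow_entry_nonneg hP0 (Tper d)) m r s
  have hpos : 0 < ((P ^ Tper d) ^ m) r s := lt_of_le_of_ne h0 (Ne.symm h)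
  exact hs (Dcl_closed hr (pathLen_rtg ((Qpow_pos_iff hP0).1 hpos)))

include hP0 hP1 in
lemma Qpow_row_sum_Dcl {q r : Fin d} {m : ℕ} (hr : r ∈ Dcl P q) :
    ∑ s ∈ Dcl P q, ((P ^ Tper d) ^ m) r s = 1 := by
  have htot : ∑ s, ((P ^ Tper d) ^ m) r s = 1 :=
    pow_row_sum (pow_row_sum hP1 (Tper d)) m r
  rw [← htot]
  exact Finset.sum_subset (Finset.subset_univ _)
    (fun x _ hx => Qpow_zero_outside hP0 hr hx)

include hP0 hP1 in
lemma Qpow_pos_Dcl {q p r : Fin d} (hq : RecSt P q) (hp : p ∈ Dcl P q) (hr : r ∈ Dcl P q) :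
    0 < ((P ^ Tper d) ^ d) p r := by
  obtain ⟨n, hn, hpath⟩ := reach_bound (Dcl_conn hP0 hP1 hq hp hr)
  rw [Fintype.card_fin] at hn
  have := pathLen_pad hpath (Dcl_self_loop hP0 hP1 hq hr) (d - n)
  rw [show n + (d - n) = d by omega] at this
  exact (Qpow_pos_iff hP0).2 this

open scoped Classical in
variable (P) in
/-- The recurrent states as a finset. -/
noncomputable def RecF : Finset (Fin d) := Finset.univ.filter (RecSt P)

lemma mem_RecF {q : Fin d} : q ∈ RecF P ↔ RecSt P q := by
  classical
  simp [RecF]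

include hP0 in
lemma Qpow_zero_rec {r s : Fin d} {m : ℕ} (hr : r ∈ RecF P) (hs : s ∉ RecF P) :
    ((P ^ Tper d) ^ m) r s = 0 := by
  by_contra h
  have h0 := pow_entry_nonneg (pow_entry_nonneg hP0 (Tper d)) m r s
  have hpos : 0 < ((P ^ Tper d) ^ m) r s := lt_of_le_of_ne h0 (Ne.symm h)
  have : Relation.ReflTransGen (Erel P) r s :=
    frel_rtg (pathLen_rtg ((Qpow_pos_iff hP0).1 hpos))
  exact hs (mem_RecF.2 (rec_closed (mem_RecF.1 hr) this))

include hP0 hP1 in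
lemma rec_extend {q : Fin d} (hq : RecSt P q) (m : ℕ) :
    ∃ s, RecSt P s ∧ pathLen (Erel P) m q s := by
  induction m with
  | zero => exact ⟨q, hq, rfl⟩
  | succ m ih =>
    obtain ⟨s, hs, hp⟩ := ih
    obtain ⟨u, hu⟩ := out_edge hP0 hP1 s
    exact ⟨u, rec_closed hs (Relation.ReflTransGen.single hu),
      pathLen_trans (n := 1) hp (pathLen_single hu)⟩

include hP0 hP1 in
lemma absorption (hd : 0 < d) (p : Fin d) : 0 < ∑ s ∈ RecF P, ((P ^ Tper d) ^ d) p s := by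
  obtain ⟨q, hq, hpq⟩ := exists_rec (P := P) p
  obtain ⟨n, hn, hpath⟩ := reach_bound hpq
  rw [Fintype.card_fin] at hn
  have hT := Tper_pos (d := d)
  have hnle : n ≤ Tper d * d := by nlinarith
  obtain ⟨s, hs, hp2⟩ := rec_extend hP0 hP1 hq (Tper d * d - n)
  have : pathLen (Erel P) (Tper d * d) p s := by
    have := pathLen_trans hpath hp2
    rwa [show n + (Tper d * d - n) = Tper d * d by omega] at this
  have hpos : 0 < ((P ^ Tper d) ^ d) p s := by
    rw [← pow_mul, pow_pos_iff hP0]; exact this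
  refine (sum_pos_iff fun i _ => pow_entry_nonneg (pow_entry_nonneg hP0 _) _ p i).2
    ⟨s, mem_RecF.2 hs, hpos⟩

end Classes


section Analysis

open Filter Topology

variable {d : ℕ}

lemma contraction {D : Finset (Fin d)} {M : Matrix (Fin d) (Fin d) ℝ} {δ : ℝ}
    (hδ0 : 0 ≤ δ)
    (hrow : ∀ p ∈ D, ∑ r ∈ D, M p r = 1)
    (hδ : ∀ p ∈ D, ∀ r ∈ D, δ ≤ M p r)
    {z : Fin d → ℝ} (hsupp : ∀ r, r ∉ D → z r = 0) (hsum : ∑ p ∈ D, z p = 0) :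
    ∑ r ∈ D, |Matrix.vecMul z M r| ≤ (1 - D.card * δ) * ∑ p ∈ D, |z p| := by
  have hentry : ∀ r ∈ D, Matrix.vecMul z M r = ∑ p ∈ D, z p * (M p r - δ) := by
    intro r _
    have h1 : Matrix.vecMul z M r = ∑ p ∈ D, z p * M p r := by
      rw [show Matrix.vecMul z M r = ∑ p, z p * M p r from rfl]
      exact (Finset.sum_subset (Finset.subset_univ _)
        (fun p _ hp => by rw [hsupp p hp, zero_mul])).symm
    rw [h1]
    have h2 : ∑ p ∈ D, z p * (M p r - δ) = ∑ p ∈ D, z p * M p r - (∑ p ∈ D, z p) * δ := by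
      rw [Finset.sum_mul, ← Finset.sum_sub_distrib]
      congr 1 with p
      ring
    rw [h2, hsum, zero_mul, sub_zero]
  calc ∑ r ∈ D, |Matrix.vecMul z M r| ≤ ∑ r ∈ D, ∑ p ∈ D, |z p| * (M p r - δ) := by
        refine Finset.sum_le_sum fun r hr => ?_
        rw [hentry r hr]
        refine (Finset.abs_sum_le_sum_abs _ _).trans (Finset.sum_le_sum fun p hp => ?_)
        rw [abs_mul, abs_of_nonneg (sub_nonneg.2 (hδ p hp r hr))]
    _ = ∑ p ∈ D, |z p| * (1 - D.card * δ) := by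
        rw [Finset.sum_comm]
        refine Finset.sum_congr rfl fun p hp => ?_
        rw [← Finset.mul_sum, Finset.sum_sub_distrib, hrow p hp, Finset.sum_const,
          nsmul_eq_mul]
    _ = (1 - D.card * δ) * ∑ p ∈ D, |z p| := by rw [← Finset.sum_mul]; ring

lemma seq_limit_zero {a c : ℕ → ℝ} {γ : ℝ} {m : ℕ} (hm : 0 < m) (hγ0 : 0 ≤ γ) (hγ1 : γ < 1)
    (ha0 : ∀ n, 0 ≤ a n) {B : ℝ} (hB : ∀ n, a n ≤ B)
    (hrec : ∀ n, a (n + m) ≤ γ * a n + c n) (hc : Tendsto c atTop (nhds 0)) :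
    Tendsto a atTop (nhds 0) := by
  have hB0 : 0 ≤ B := le_trans (ha0 0) (hB 0)
  rw [Metric.tendsto_atTop]
  intro ε hε
  obtain ⟨N₀, hN₀⟩ : ∃ N₀, ∀ n ≥ N₀, |c n| ≤ (1 - γ) * ε / 4 := by
    have := (Metric.tendsto_atTop.1 hc) ((1 - γ) * ε / 4) (by nlinarith)
    obtain ⟨N, hN⟩ := this
    exact ⟨N, fun n hn => by simpa [Real.dist_eq] using (hN n hn).le⟩
  have key : ∀ j, ∀ n ≥ N₀, a (n + j * m) ≤ γ ^ j * B + ε / 2 := by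
    intro j
    induction j with
    | zero => intro n hn; simpa using le_trans (hB n) (by linarith)
    | succ j ih =>
      intro n hn
      have h1 : a (n + (j + 1) * m) = a ((n + j * m) + m) := by ring_nf
      rw [h1]
      have h2 := hrec (n + j * m)
      have h3 := ih n hn
      have h4 : |c (n + j * m)| ≤ (1 - γ) * ε / 4 := hN₀ _ (by omega)
      have h5 : c (n + j * m) ≤ (1 - γ) * ε / 4 := (abs_le.1 h4).2
      have h6 : γ * a (n + j * m) ≤ γ * (γ ^ j * B + ε / 2) :=
        mul_le_mul_of_nonneg_left h3 hγ0
      calc a ((n + j * m) + m) ≤ γ * a (n + j * m) + c (n + j * m) := h2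
        _ ≤ γ * (γ ^ j * B + ε / 2) + (1 - γ) * ε / 4 := by linarith
        _ ≤ γ ^ (j + 1) * B + ε / 2 := by rw [pow_succ]; nlinarith
  obtain ⟨jm, hjm⟩ : ∃ jm, γ ^ jm * (B + 1) < ε / 2 := by
    have := tendsto_pow_atTop_nhds_zero_of_lt_one hγ0 hγ1
    have h2 := (Metric.tendsto_atTop.1 this) (ε / (2 * (B + 1))) (by positivity)
    obtain ⟨N, hN⟩ := h2
    refine ⟨N, ?_⟩
    have := hN N le_rfl
    rw [Real.dist_eq, sub_zero, abs_of_nonneg (pow_nonneg hγ0 _)] at this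
    calc γ ^ N * (B + 1) < ε / (2 * (B + 1)) * (B + 1) := by
          exact mul_lt_mul_of_pos_right this (by linarith)
      _ = ε / 2 := by field_simp
  refine ⟨N₀ + jm * m, fun n hn => ?_⟩
  have h1 : a n ≤ γ ^ jm * B + ε / 2 := by
    have := key jm (n - jm * m) (by omega)
    rwa [show n - jm * m + jm * m = n by omega] at this
  have h2 : γ ^ jm * B ≤ γ ^ jm * (B + 1) :=
    mul_le_mul_of_nonneg_left (by linarith) (pow_nonneg hγ0 _)
  rw [Real.dist_eq, sub_zero, abs_of_nonneg (ha0 n)]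
  linarith

end Analysis


section Xlemmas

open Filter Topology

variable {d : ℕ} {P : Matrix (Fin d) (Fin d) ℝ} {I : Fin d → ℝ}
variable (hP0 : ∀ i j, 0 ≤ P i j) (hP1 : ∀ i, ∑ j, P i j = 1)
variable (hI0 : ∀ i, 0 ≤ I i) (hI1 : ∑ i, I i = 1)

variable (P I) in
/-- The distribution after `k + T·n` steps. -/
noncomputable def X (k n : ℕ) : Fin d → ℝ :=
  Matrix.vecMul I (P ^ k * (P ^ Tper d) ^ n)

lemma X_apply {k n : ℕ} {r : Fin d} :
    X P I k n r = ∑ p, I p * (P ^ (k + Tper d * n)) p r := by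
  rw [X, pow_add, pow_mul]
  rfl

lemma X_rec {k n m : ℕ} : X P I k (n + m) = Matrix.vecMul (X P I k n) ((P ^ Tper d) ^ m) := by
  rw [X, X, pow_add, ← mul_assoc, ← Matrix.vecMul_vecMul]

lemma X_rec_apply {k n m : ℕ} {r : Fin d} :
    X P I k (n + m) r = ∑ p, X P I k n p * ((P ^ Tper d) ^ m) p r := by
  rw [X_rec]; rfl

include hP0 hI0 in
lemma X_nonneg {k n : ℕ} {r : Fin d} : 0 ≤ X P I k n r := by
  rw [X_apply]
  exact Finset.sum_nonneg fun p _ => mul_nonneg (hI0 p) (pow_entry_nonneg hP0 _ p r)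

include hP1 hI1 in
lemma X_sum {k n : ℕ} : ∑ r, X P I k n r = 1 := by
  simp only [X_apply]
  rw [Finset.sum_comm]
  calc ∑ p, ∑ r, I p * (P ^ (k + Tper d * n)) p r
      = ∑ p, I p * ∑ r, (P ^ (k + Tper d * n)) p r := by
        simp [Finset.mul_sum]
    _ = 1 := by simp [pow_row_sum hP1, hI1]

include hP0 hP1 hI0 hI1 in
lemma X_le_one {k n : ℕ} {r : Fin d} : X P I k n r ≤ 1 := by
  rw [← X_sum hP1 hI1 (k := k) (n := n)]
  exact Finset.single_le_sum (f := fun p => X P I k n p) (fun p _ => X_nonneg hP0 hI0) (Finset.mem_univ r)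

include hP0 hI0 in
lemma X_pos_iff {k n : ℕ} {r : Fin d} :
    0 < X P I k n r ↔ ∃ p, 0 < I p ∧ pathLen (Erel P) (k + Tper d * n) p r := by
  rw [X_apply, sum_pos_iff fun p _ => mul_nonneg (hI0 p) (pow_entry_nonneg hP0 _ p r)]
  constructor
  · rintro ⟨p, -, hp⟩
    have h1 : 0 < I p := by
      rcases lt_or_eq_of_le (hI0 p) with h | h
      · exact h
      · exfalso; rw [← h, zero_mul] at hp; exact lt_irrefl 0 hp
    have h2 : 0 < (P ^ (k + Tper d * n)) p r := by
      by_contra hc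
      push_neg at hc
      nlinarith [pow_entry_nonneg hP0 (k + Tper d * n) p r]
    exact ⟨p, h1, (pow_pos_iff hP0 _ p r).1 h2⟩
  · rintro ⟨p, h1, h2⟩
    exact ⟨p, Finset.mem_univ p, mul_pos h1 ((pow_pos_iff hP0 _ p r).2 h2)⟩

end Xlemmas


section Transient

open Filter Topology

variable {d : ℕ} {P : Matrix (Fin d) (Fin d) ℝ} {I : Fin d → ℝ}
variable (hP0 : ∀ i j, 0 ≤ P i j) (hP1 : ∀ i, ∑ j, P i j = 1)
variable (hI0 : ∀ i, 0 ≤ I i) (hI1 : ∑ i, I i = 1)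

include hP0 hP1 hI0 hI1 in
lemma transient_tendsto (hd : 0 < d) {k : ℕ} {q : Fin d} (hq : ¬ RecSt P q) :
    Tendsto (fun n => X P I k n q) atTop (nhds 0) := by
  classical
  set A : Matrix (Fin d) (Fin d) ℝ := (P ^ Tper d) ^ d with hA
  have hA0 : ∀ p r, 0 ≤ A p r := fun p r => pow_entry_nonneg (pow_entry_nonneg hP0 _) _ p r
  have hArow : ∀ p, ∑ r, A p r = 1 := fun p => pow_row_sum (pow_row_sum hP1 _) _ p
  -- uniform absorption constant
  obtain ⟨p₀, -, hmin⟩ := Finset.exists_min_image Finset.univ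
    (fun p => ∑ s ∈ RecF P, A p s) ⟨⟨0, hd⟩, Finset.mem_univ _⟩
  set ε : ℝ := ∑ s ∈ RecF P, A p₀ s with hε
  have hε0 : 0 < ε := absorption hP0 hP1 hd p₀
  have hε1 : ε ≤ 1 := by
    rw [hε, ← hArow p₀]
    exact Finset.sum_le_sum_of_subset_of_nonneg (Finset.subset_univ _)
      fun r _ _ => hA0 p₀ r
  set tr : ℕ → ℝ := fun n => ∑ r ∈ Finset.univ \ RecF P, X P I k n r with htr
  have htr0 : ∀ n, 0 ≤ tr n := fun n =>
    Finset.sum_nonneg fun r _ => X_nonneg hP0 hI0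
  have htr1 : ∀ n, tr n ≤ 1 := by
    intro n
    rw [htr, ← X_sum hP1 hI1 (k := k) (n := n)]
    exact Finset.sum_le_sum_of_subset_of_nonneg (Finset.subset_univ _)
      fun r _ _ => X_nonneg hP0 hI0
  have hdec : ∀ n, tr (n + d) ≤ (1 - ε) * tr n := by
    intro n
    have h1 : tr (n + d) = ∑ p, X P I k n p * ∑ r ∈ Finset.univ \ RecF P, A p r := by
      calc tr (n + d) = ∑ r ∈ Finset.univ \ RecF P, ∑ p, X P I k n p * A p r := by
            exact Finset.sum_congr rfl fun r _ => by rw [X_rec_apply, ← hA]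
        _ = ∑ p, ∑ r ∈ Finset.univ \ RecF P, X P I k n p * A p r := Finset.sum_comm
        _ = ∑ p, X P I k n p * ∑ r ∈ Finset.univ \ RecF P, A p r := by
            exact Finset.sum_congr rfl fun p _ => by rw [Finset.mul_sum]
    rw [h1]
    have h2 : ∀ p, X P I k n p * ∑ r ∈ Finset.univ \ RecF P, A p r ≤
        (if p ∈ RecF P then 0 else (1 - ε) * X P I k n p) := by
      intro p
      by_cases hp : p ∈ RecF P
      · simp only [hp, if_true]
        have : ∑ r ∈ Finset.univ \ RecF P, A p r = 0 :=
          Finset.sum_eq_zero fun r hr => by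
            rw [hA]; exact Qpow_zero_rec hP0 hp (Finset.mem_sdiff.1 hr).2
        rw [this, mul_zero]
      · simp only [hp, if_false]
        have hsplit : ∑ r ∈ Finset.univ \ RecF P, A p r = 1 - ∑ r ∈ RecF P, A p r := by
          have := Finset.sum_sdiff_eq_sub (f := fun r => A p r) (Finset.subset_univ (RecF P))
          rw [this, hArow p]
        have hle : ∑ r ∈ Finset.univ \ RecF P, A p r ≤ 1 - ε := by
          rw [hsplit]
          have := hmin p (Finset.mem_univ p)
          linarith
        calc X P I k n p * ∑ r ∈ Finset.univ \ RecF P, A p r ≤ X P I k n p * (1 - ε) :=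
              mul_le_mul_of_nonneg_left hle (X_nonneg hP0 hI0)
          _ = (1 - ε) * X P I k n p := by ring
    calc ∑ p, X P I k n p * ∑ r ∈ Finset.univ \ RecF P, A p r
        ≤ ∑ p, (if p ∈ RecF P then 0 else (1 - ε) * X P I k n p) :=
          Finset.sum_le_sum fun p _ => h2 p
      _ = ∑ p ∈ Finset.univ \ RecF P, (1 - ε) * X P I k n p := by
          rw [Finset.sum_ite, Finset.sum_const_zero, zero_add]
          congr 1
          ext p
          simp [Finset.mem_sdiff, Finset.mem_filter]
      _ = (1 - ε) * tr n := by rw [htr, Finset.mul_sum]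
  -- geometric bound
  have hgeo : ∀ n, tr n ≤ (1 - ε) ^ (n / d) := by
    intro n
    induction n using Nat.strong_induction_on with
    | _ n ih =>
      by_cases hn : n < d
      · rw [Nat.div_eq_of_lt hn, pow_zero]; exact htr1 n
      · push_neg at hn
        have h1 : tr n = tr ((n - d) + d) := by rw [Nat.sub_add_cancel hn]
        have h2 := hdec (n - d)
        have h3 := ih (n - d) (by omega)
        have h4 : (1 - ε) * tr (n - d) ≤ (1 - ε) * (1 - ε) ^ ((n - d) / d) :=
          mul_le_mul_of_nonneg_left h3 (by linarith)
        have h5 : n / d = (n - d) / d + 1 := by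
          rw [Nat.div_eq_sub_div hd hn]
        rw [h1, h5, pow_succ]
        calc tr ((n - d) + d) ≤ (1 - ε) * tr (n - d) := h2
          _ ≤ (1 - ε) * (1 - ε) ^ ((n - d) / d) := h4
          _ = (1 - ε) ^ ((n - d) / d) * (1 - ε) := by ring
  have htrlim : Tendsto tr atTop (nhds 0) := by
    have hpow : Tendsto (fun m : ℕ => (1 - ε) ^ m) atTop (nhds 0) :=
      tendsto_pow_atTop_nhds_zero_of_lt_one (by linarith) (by linarith)
    have hdiv : Tendsto (fun n : ℕ => n / d) atTop atTop := by
      apply Filter.tendsto_atTop_atTop_of_monotone (fun a b hab => Nat.div_le_div_right hab)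
      intro m
      exact ⟨m * d, (Nat.le_div_iff_mul_le hd).2 le_rfl⟩
    have := hpow.comp hdiv
    exact squeeze_zero htr0 hgeo this
  -- conclude
  have hqmem : q ∈ Finset.univ \ RecF P := by
    simp [Finset.mem_sdiff, mem_RecF, hq]
  have hle : ∀ n, X P I k n q ≤ tr n := fun n =>
    Finset.single_le_sum (f := fun r => X P I k n r)
      (fun r _ => X_nonneg hP0 hI0) hqmem
  exact squeeze_zero (fun n => X_nonneg hP0 hI0) hle htrlim

end Transient


section Recurrent

open Filter Topology

variable {d : ℕ} {P : Matrix (Fin d) (Fin d) ℝ} {I : Fin d → ℝ}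
variable (hP0 : ∀ i j, 0 ≤ P i j) (hP1 : ∀ i, ∑ j, P i j = 1)
variable (hI0 : ∀ i, 0 ≤ I i) (hI1 : ∑ i, I i = 1)

include hP0 hP1 hI0 hI1 in
lemma recurrent_master (hd : 0 < d) {k : ℕ} {q : Fin d} (hq : RecSt P q) :
    ∃ L, Tendsto (fun n => X P I k n q) atTop (nhds L) ∧ 0 ≤ L ∧
      (L ≠ 0 ↔ ∃ p, 0 < I p ∧ ∃ l ≤ d, pathLen (Erel P) (k + Tper d * l) p q) := by
  classical
  set A : Matrix (Fin d) (Fin d) ℝ := (P ^ Tper d) ^ d with hA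
  have hqD : q ∈ Dcl P q := self_mem_Dcl
  have hA0 : ∀ p r, 0 ≤ A p r := fun p r =>
    pow_entry_nonneg (pow_entry_nonneg hP0 _) _ p r
  have hArow : ∀ p ∈ Dcl P q, ∑ r ∈ Dcl P q, A p r = 1 := fun p hp =>
    Qpow_row_sum_Dcl hP0 hP1 hp
  have hAout : ∀ p ∈ Dcl P q, ∀ r, r ∉ Dcl P q → A p r = 0 := fun p hp r hr =>
    Qpow_zero_outside hP0 hp hr
  obtain ⟨t₀, ht₀, hmin⟩ := Finset.exists_min_image ((Dcl P q) ×ˢ (Dcl P q))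
    (fun t => A t.1 t.2) ⟨(q, q), Finset.mem_product.2 ⟨hqD, hqD⟩⟩
  set δ := A t₀.1 t₀.2 with hδ
  have hδ0 : 0 < δ :=
    Qpow_pos_Dcl hP0 hP1 hq (Finset.mem_product.1 ht₀).1 (Finset.mem_product.1 ht₀).2
  have hδle : ∀ p ∈ Dcl P q, ∀ r ∈ Dcl P q, δ ≤ A p r := fun p hp r hr =>
    hmin (p, r) (Finset.mem_product.2 ⟨hp, hr⟩)
  set γ : ℝ := 1 - ((Dcl P q).card : ℝ) * δ with hγ
  have hcard : 0 < (Dcl P q).card := Finset.card_pos.2 ⟨q, hqD⟩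
  have hγ0 : 0 ≤ γ := by
    have h1 := hArow q hqD
    have h2 : ((Dcl P q).card : ℝ) * δ ≤ ∑ r ∈ Dcl P q, A q r := by
      have := Finset.card_nsmul_le_sum (Dcl P q) (fun r => A q r) δ
        (fun r hr => hδle q hqD r hr)
      rwa [nsmul_eq_mul] at this
    rw [hγ]; linarith
  have hγ1 : γ < 1 := by
    have : 0 < ((Dcl P q).card : ℝ) * δ := by positivity
    rw [hγ]; linarith
  -- the stationary vector
  set u : ℕ → Fin d → ℝ := fun n r => (A ^ (n + 1)) q r with hu
  have hApow : ∀ m : ℕ, A ^ m = (P ^ Tper d) ^ (d * m) := fun m => by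
    rw [hA, ← pow_mul]
  have husupp : ∀ n r, r ∉ Dcl P q → u n r = 0 := by
    intro n r hr
    show (A ^ (n + 1)) q r = 0
    rw [hApow]
    exact Qpow_zero_outside hP0 hqD hr
  have husum : ∀ n, ∑ r ∈ Dcl P q, u n r = 1 := by
    intro n
    show ∑ r ∈ Dcl P q, (A ^ (n + 1)) q r = 1
    simp only [hApow]
    exact Qpow_row_sum_Dcl hP0 hP1 hqD
  have huge : ∀ n, ∀ r ∈ Dcl P q, δ ≤ u n r := by
    intro n r hr
    show δ ≤ (A ^ (n + 1)) q r
    rw [pow_succ, Matrix.mul_apply]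
    have hAn0 : ∀ p s, 0 ≤ (A ^ n) p s := pow_entry_nonneg hA0 n
    have hrow : ∑ p ∈ Dcl P q, (A ^ n) q p = 1 := by
      simp only [hApow]
      exact Qpow_row_sum_Dcl hP0 hP1 hqD
    calc δ = (∑ p ∈ Dcl P q, (A ^ n) q p) * δ := by rw [hrow, one_mul]
      _ = ∑ p ∈ Dcl P q, (A ^ n) q p * δ := Finset.sum_mul _ _ _
      _ ≤ ∑ p ∈ Dcl P q, (A ^ n) q p * A p r :=
          Finset.sum_le_sum fun p hp =>
            mul_le_mul_of_nonneg_left (hδle p hp r hr) (hAn0 q p)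
      _ ≤ ∑ p, (A ^ n) q p * A p r :=
          Finset.sum_le_sum_of_subset_of_nonneg (Finset.subset_univ _)
            (fun p _ _ => mul_nonneg (hAn0 q p) (hA0 p r))
  have hurec : ∀ n, u (n + 1) = Matrix.vecMul (u n) A := by
    intro n
    funext r
    show (A ^ (n + 2)) q r = _
    rw [pow_succ, Matrix.mul_apply]
    rfl
  set b : ℕ → ℝ := fun n => ∑ r ∈ Dcl P q, |u (n + 1) r - u n r| with hb
  have hb0 : ∀ n, 0 ≤ b n := fun n => Finset.sum_nonneg fun r _ => abs_nonneg _
  have hbrec : ∀ n, b (n + 1) ≤ γ * b n := by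
    intro n
    have hc := contraction (d := d) hδ0.le hArow hδle
      (z := fun r => u (n + 1) r - u n r)
      (fun r hr => by show u (n + 1) r - u n r = 0; rw [husupp _ _ hr, husupp _ _ hr, sub_zero])
      (by rw [Finset.sum_sub_distrib, husum, husum, sub_self])
    have heq : ∀ r, u (n + 2) r - u (n + 1) r =
        Matrix.vecMul (fun r => u (n + 1) r - u n r) A r := by
      intro r
      have : (fun r => u (n + 1) r - u n r) = u (n + 1) - u n := rfl
      rw [this, Matrix.sub_vecMul, ← hurec, ← hurec]
      rfl
    calc b (n + 1) = ∑ r ∈ Dcl P q, |Matrix.vecMul (fun r => u (n + 1) r - u n r) A r| :=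
          Finset.sum_congr rfl fun r _ => by rw [← heq r]
      _ ≤ γ * b n := hc
  have hbgeo : ∀ n, b n ≤ b 0 * γ ^ n := by
    intro n
    induction n with
    | zero => simp
    | succ n ih =>
      calc b (n + 1) ≤ γ * b n := hbrec n
        _ ≤ γ * (b 0 * γ ^ n) := mul_le_mul_of_nonneg_left ih hγ0
        _ = b 0 * γ ^ (n + 1) := by ring
  have hcauchy : CauchySeq u := by
    apply cauchySeq_of_le_geometric γ (b 0) hγ1
    intro n
    rw [dist_pi_le_iff (mul_nonneg (hb0 0) (pow_nonneg hγ0 n))]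
    intro r
    rw [Real.dist_eq]
    by_cases hr : r ∈ Dcl P q
    · calc |u n r - u (n + 1) r| = |u (n + 1) r - u n r| := abs_sub_comm _ _
        _ ≤ b n := Finset.single_le_sum (f := fun s => |u (n + 1) s - u n s|)
            (fun s _ => abs_nonneg _) hr
        _ ≤ b 0 * γ ^ n := hbgeo n
    · rw [husupp n r hr, husupp (n + 1) r hr, sub_zero, abs_zero]
      exact mul_nonneg (hb0 0) (pow_nonneg hγ0 n)
  obtain ⟨π, hπ⟩ := cauchySeq_tendsto_of_complete hcauchy
  have hπr : ∀ r, Tendsto (fun n => u n r) atTop (nhds (π r)) := fun r =>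
    (tendsto_pi_nhds.1 hπ) r
  have hπsupp : ∀ r, r ∉ Dcl P q → π r = 0 := by
    intro r hr
    refine tendsto_nhds_unique (hπr r) ?_
    have : (fun n => u n r) = fun _ => (0 : ℝ) := funext fun n => husupp n r hr
    rw [this]
    exact tendsto_const_nhds
  have hπge : ∀ r ∈ Dcl P q, δ ≤ π r := fun r hr =>
    ge_of_tendsto (hπr r) (Filter.Eventually.of_forall fun n => huge n r hr)
  have hπ0 : ∀ r, 0 ≤ π r := by
    intro r
    by_cases hr : r ∈ Dcl P q
    · exact le_trans hδ0.le (hπge r hr)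
    · rw [hπsupp r hr]
  have hπsum : ∑ r ∈ Dcl P q, π r = 1 := by
    refine tendsto_nhds_unique (tendsto_finset_sum _ fun r _ => hπr r) ?_
    have : (fun n => ∑ r ∈ Dcl P q, u n r) = fun _ => (1 : ℝ) := funext fun n => husum n
    rw [this]
    exact tendsto_const_nhds
  have hπA : ∀ r, ∑ p ∈ Dcl P q, π p * A p r = π r := by
    intro r
    have h1 : Tendsto (fun n => ∑ p ∈ Dcl P q, u n p * A p r) atTop
        (nhds (∑ p ∈ Dcl P q, π p * A p r)) :=
      tendsto_finset_sum _ fun p _ => (hπr p).mul_const _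
    have h2 : ∀ n, ∑ p ∈ Dcl P q, u n p * A p r = u (n + 1) r := by
      intro n
      rw [hurec n]
      show _ = ∑ p, u n p * A p r
      exact Finset.sum_subset (Finset.subset_univ _)
        (fun p _ hp => by rw [husupp n p hp, zero_mul])
    have h3 : Tendsto (fun n => u (n + 1) r) atTop (nhds (π r)) :=
      (hπr r).comp (tendsto_add_atTop_nat 1)
    refine tendsto_nhds_unique ?_ h3
    have : (fun n => ∑ p ∈ Dcl P q, u n p * A p r) = fun n => u (n + 1) r :=
      funext h2
    rw [← this]
    exact h1
  -- mass on the class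
  set s : ℕ → ℝ := fun n => ∑ r ∈ Dcl P q, X P I k n r with hs
  have hX0 : ∀ n r, 0 ≤ X P I k n r := fun n r => X_nonneg hP0 hI0
  have hXsplitD : ∀ n r, X P I k (n + d) r =
      ∑ p ∈ Dcl P q, X P I k n p * A p r +
      ∑ p ∈ Finset.univ \ Dcl P q, X P I k n p * A p r := by
    intro n r
    rw [X_rec_apply, ← hA, ← Finset.sum_sdiff (Finset.subset_univ (Dcl P q))]
    ring
  have hinner : ∀ n, ∑ r ∈ Dcl P q, ∑ p ∈ Dcl P q, X P I k n p * A p r = s n := by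
    intro n
    rw [Finset.sum_comm]
    refine Finset.sum_congr rfl fun p hp => ?_
    rw [← Finset.mul_sum, hArow p hp, mul_one]
  have hsrec : ∀ n, s (n + d) = s n + ∑ r ∈ Dcl P q, ∑ p ∈ Finset.univ \ Dcl P q,
      X P I k n p * A p r := by
    intro n
    rw [hs]
    calc ∑ r ∈ Dcl P q, X P I k (n + d) r
        = ∑ r ∈ Dcl P q, (∑ p ∈ Dcl P q, X P I k n p * A p r +
            ∑ p ∈ Finset.univ \ Dcl P q, X P I k n p * A p r) :=
          Finset.sum_congr rfl fun r _ => hXsplitD n r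
      _ = s n + ∑ r ∈ Dcl P q, ∑ p ∈ Finset.univ \ Dcl P q, X P I k n p * A p r := by
          rw [Finset.sum_add_distrib, hinner n]
  have hsled : ∀ n, s n ≤ s (n + d) := by
    intro n
    rw [hsrec n]
    have : 0 ≤ ∑ r ∈ Dcl P q, ∑ p ∈ Finset.univ \ Dcl P q, X P I k n p * A p r :=
      Finset.sum_nonneg fun r _ => Finset.sum_nonneg fun p _ =>
        mul_nonneg (hX0 n p) (hA0 p r)
    linarith
  have hsle : ∀ n m, s n ≤ s (n + m) := by
    intro n m
    have h1 : s (n + m) = ∑ r ∈ Dcl P q, ∑ p, X P I k n p * ((P ^ Tper d) ^ m) p r :=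
      Finset.sum_congr rfl fun r _ => X_rec_apply
    have h2 : ∑ p ∈ Dcl P q, ∑ r ∈ Dcl P q, X P I k n p * ((P ^ Tper d) ^ m) p r = s n := by
      refine Finset.sum_congr rfl fun p hp => ?_
      rw [← Finset.mul_sum, Qpow_row_sum_Dcl hP0 hP1 hp, mul_one]
    calc s n = ∑ p ∈ Dcl P q, ∑ r ∈ Dcl P q, X P I k n p * ((P ^ Tper d) ^ m) p r := h2.symm
      _ ≤ ∑ p, ∑ r ∈ Dcl P q, X P I k n p * ((P ^ Tper d) ^ m) p r :=
          Finset.sum_le_sum_of_subset_of_nonneg (Finset.subset_univ _)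
            (fun p _ _ => Finset.sum_nonneg fun r _ =>
              mul_nonneg (hX0 n p) (pow_entry_nonneg (pow_entry_nonneg hP0 _) _ p r))
      _ = s (n + m) := by rw [h1, Finset.sum_comm]
  have hsmono : Monotone s := monotone_nat_of_le_succ fun n => by
    simpa using hsle n 1
  have hs0 : ∀ n, 0 ≤ s n := fun n => Finset.sum_nonneg fun r _ => hX0 n r
  have hs1 : ∀ n, s n ≤ 1 := by
    intro n
    rw [hs, ← X_sum hP1 hI1 (k := k) (n := n)]
    exact Finset.sum_le_sum_of_subset_of_nonneg (Finset.subset_univ _)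
      (fun r _ _ => hX0 n r)
  have hbdd : BddAbove (Set.range s) := ⟨1, by rintro _ ⟨n, rfl⟩; exact hs1 n⟩
  set μ := ⨆ n, s n with hμdef
  have hμ : Tendsto s atTop (nhds μ) := tendsto_atTop_ciSup hsmono hbdd
  have hsleμ : ∀ n, s n ≤ μ := fun n => le_ciSup hbdd n
  -- the main estimate
  set a : ℕ → ℝ := fun n => ∑ r ∈ Dcl P q, |X P I k n r - s n * π r| with ha
  have ha0 : ∀ n, 0 ≤ a n := fun n => Finset.sum_nonneg fun r _ => abs_nonneg _
  have habd : ∀ n, a n ≤ 2 := by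
    intro n
    have h1 : ∀ r ∈ Dcl P q, |X P I k n r - s n * π r| ≤ X P I k n r + s n * π r := by
      intro r hr
      have := hX0 n r
      have h2 : 0 ≤ s n * π r := mul_nonneg (hs0 n) (hπ0 r)
      rw [abs_le]
      constructor <;> linarith
    calc a n ≤ ∑ r ∈ Dcl P q, (X P I k n r + s n * π r) := Finset.sum_le_sum h1
      _ = s n + s n * 1 := by rw [Finset.sum_add_distrib, ← Finset.mul_sum, hπsum, hs]
      _ ≤ 2 := by have := hs1 n; linarith
  have harec : ∀ n, a (n + d) ≤ γ * a n + 2 * (s (n + d) - s n) := by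
    intro n
    set w : Fin d → ℝ := fun p => if p ∈ Dcl P q then X P I k n p - s n * π p else 0 with hw
    have hwsupp : ∀ p, p ∉ Dcl P q → w p = 0 := fun p hp => by simp [hw, hp]
    have hwD : ∀ p ∈ Dcl P q, w p = X P I k n p - s n * π p := fun p hp => by simp [hw, hp]
    have hwsum : ∑ p ∈ Dcl P q, w p = 0 := by
      rw [Finset.sum_congr rfl hwD, Finset.sum_sub_distrib, ← Finset.mul_sum, hπsum,
        mul_one, show (∑ x ∈ Dcl P q, X P I k n x) = s n from rfl, sub_self]
    have hvm : ∀ r, Matrix.vecMul w A r =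
        ∑ p ∈ Dcl P q, X P I k n p * A p r - s n * π r := by
      intro r
      show ∑ p, w p * A p r = _
      rw [← Finset.sum_subset (Finset.subset_univ (Dcl P q))
        (fun p _ hp => by rw [hwsupp p hp, zero_mul])]
      calc ∑ p ∈ Dcl P q, w p * A p r
          = ∑ p ∈ Dcl P q, (X P I k n p * A p r - s n * (π p * A p r)) := by
            refine Finset.sum_congr rfl fun p hp => ?_
            rw [hwD p hp]; ring
        _ = ∑ p ∈ Dcl P q, X P I k n p * A p r - s n * ∑ p ∈ Dcl P q, π p * A p r := by
            rw [Finset.sum_sub_distrib, ← Finset.mul_sum]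
        _ = ∑ p ∈ Dcl P q, X P I k n p * A p r - s n * π r := by rw [hπA r]
    have hkey : ∀ r ∈ Dcl P q, X P I k (n + d) r - s (n + d) * π r =
        Matrix.vecMul w A r +
        ((∑ p ∈ Finset.univ \ Dcl P q, X P I k n p * A p r) - (s (n + d) - s n) * π r) := by
      intro r _
      rw [hXsplitD n r, hvm r]
      ring
    have hcontr := contraction (d := d) hδ0.le hArow hδle hwsupp hwsum
    have hwabs : ∑ p ∈ Dcl P q, |w p| = a n :=
      Finset.sum_congr rfl fun p hp => by rw [hwD p hp]
    have hEpos : ∀ r, 0 ≤ ∑ p ∈ Finset.univ \ Dcl P q, X P I k n p * A p r := fun r =>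
      Finset.sum_nonneg fun p _ => mul_nonneg (hX0 n p) (hA0 p r)
    have hcpos : 0 ≤ s (n + d) - s n := by have := hsled n; linarith
    calc a (n + d)
        = ∑ r ∈ Dcl P q, |Matrix.vecMul w A r +
            ((∑ p ∈ Finset.univ \ Dcl P q, X P I k n p * A p r) -
              (s (n + d) - s n) * π r)| :=
          Finset.sum_congr rfl fun r hr => by rw [hkey r hr]
      _ ≤ ∑ r ∈ Dcl P q, (|Matrix.vecMul w A r| +
            ((∑ p ∈ Finset.univ \ Dcl P q, X P I k n p * A p r) +
              (s (n + d) - s n) * π r)) := by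
          refine Finset.sum_le_sum fun r hr => ?_
          have h1 : |(∑ p ∈ Finset.univ \ Dcl P q, X P I k n p * A p r) -
              (s (n + d) - s n) * π r| ≤
              (∑ p ∈ Finset.univ \ Dcl P q, X P I k n p * A p r) +
              (s (n + d) - s n) * π r := by
            have h2 := hEpos r
            have h3 : 0 ≤ (s (n + d) - s n) * π r := mul_nonneg hcpos (hπ0 r)
            rw [abs_le]
            constructor <;> linarith
          calc |Matrix.vecMul w A r + _| ≤ |Matrix.vecMul w A r| + |_| := abs_add_le _ _
            _ ≤ _ := by linarith
      _ = (∑ r ∈ Dcl P q, |Matrix.vecMul w A r|) +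
            ((∑ r ∈ Dcl P q, ∑ p ∈ Finset.univ \ Dcl P q, X P I k n p * A p r) +
              (s (n + d) - s n) * ∑ r ∈ Dcl P q, π r) := by
          rw [Finset.sum_add_distrib, Finset.sum_add_distrib, ← Finset.mul_sum]
      _ ≤ γ * a n + 2 * (s (n + d) - s n) := by
          have h4 : ∑ r ∈ Dcl P q, ∑ p ∈ Finset.univ \ Dcl P q, X P I k n p * A p r =
              s (n + d) - s n := by
            have := hsrec n; linarith
          rw [h4, hπsum, mul_one, ← hwabs]
          have := hcontr
          have hγa : (1 - ((Dcl P q).card : ℝ) * δ) * ∑ p ∈ Dcl P q, |w p| =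
              γ * ∑ p ∈ Dcl P q, |w p| := by rw [hγ]
          linarith
  have hc : Tendsto (fun n => 2 * (s (n + d) - s n)) atTop (nhds 0) := by
    have h1 : Tendsto (fun n => s (n + d)) atTop (nhds μ) :=
      hμ.comp (tendsto_add_atTop_nat d)
    have h2 := (h1.sub hμ).const_mul 2
    simpa using h2
  have haz : Tendsto a atTop (nhds 0) :=
    seq_limit_zero hd hγ0 hγ1 ha0 habd harec hc
  have hXlim : Tendsto (fun n => X P I k n q) atTop (nhds (μ * π q)) := by
    have h1 : Tendsto (fun n => X P I k n q - s n * π q) atTop (nhds 0) := by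
      refine squeeze_zero_norm (fun n => ?_) haz
      exact Finset.single_le_sum (f := fun r => |X P I k n r - s n * π r|)
        (fun r _ => abs_nonneg _) hqD
    have h2 : Tendsto (fun n => s n * π q) atTop (nhds (μ * π q)) := hμ.mul_const _
    simpa using h1.add h2
  have hμ0 : 0 ≤ μ := le_trans (hs0 0) (hsleμ 0)
  refine ⟨μ * π q, hXlim, mul_nonneg hμ0 (hπ0 q), ?_, ?_⟩
  · intro hL
    have hμpos : 0 < μ := by
      rcases lt_or_eq_of_le hμ0 with h | h
      · exact h
      · exfalso; rw [← h, zero_mul] at hL; exact hL rfl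
    have hex : ∃ n, 0 < s n := by
      by_contra h
      push_neg at h
      have hz : ∀ n, s n = 0 := fun n => le_antisymm (h n) (hs0 n)
      have : μ = 0 := by
        refine tendsto_nhds_unique hμ ?_
        have : s = fun _ => (0 : ℝ) := funext hz
        rw [this]
        exact tendsto_const_nhds
      linarith
    obtain ⟨n, hn⟩ := hex
    obtain ⟨r, hr, hXr⟩ := (sum_pos_iff fun r _ => hX0 n r).1 hn
    obtain ⟨p, hIp, hpath⟩ := (X_pos_iff hP0 hI0).1 hXr
    have hrq := (rec_F_sym hP0 hP1 hq (mem_Dcl.1 hr)).2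
    obtain ⟨m, hm⟩ := rtg_iff_pathLen.1 hrq
    have hm' : pathLen (Erel P) (Tper d * m) r q := pathF_iff.1 hm
    have hfull : pathLen (Erel P) ((k + Tper d * n) + Tper d * m) p q :=
      pathLen_trans hpath hm'
    rw [show (k + Tper d * n) + Tper d * m = k + Tper d * (n + m) by ring] at hfull
    obtain ⟨p', hp1, hp2⟩ := pathLen_split hfull
    have hp2' : pathLen (Frel P) (n + m) p' q := pathF_iff.2 hp2
    obtain ⟨l, hl, hp3⟩ := reach_bound (pathLen_rtg hp2')
    rw [Fintype.card_fin] at hl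
    exact ⟨p, hIp, l, Nat.le_of_lt hl, pathLen_trans hp1 (pathF_iff.1 hp3)⟩
  · rintro ⟨p, hIp, l, hld, hpath⟩
    have hXl : 0 < X P I k l q := (X_pos_iff hP0 hI0).2 ⟨p, hIp, hpath⟩
    have hsl : 0 < s l :=
      lt_of_lt_of_le hXl (Finset.single_le_sum (f := fun r => X P I k l r)
        (fun r _ => hX0 l r) hqD)
    have hμpos : 0 < μ := lt_of_lt_of_le hsl (hsleμ l)
    exact ne_of_gt (mul_pos hμpos (lt_of_lt_of_le hδ0 (hπge q hqD)))

end Recurrent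

end MCAux

/-- Structure of the limit distributions of a finite Markov chain: there is a period `T`
(dividing `lcm(1, …, d)`) and limit distributions `π^(0), …, π^(T−1)`, with
`I·P^k·(P^T)^n → π^(k)`, and `π^(k)(q) ≠ 0` iff `q` lies in a bottom SCC and is reachable
from the support of `I` by a path of length `k + T·ℓ` for some `ℓ ≤ d`. -/


theorem stmt5 (d : ℕ) (P : Matrix (Fin d) (Fin d) ℝ)
    (hP0 : ∀ i j, 0 ≤ P i j ∧ P i j ≤ 1) (hP1 : ∀ i, ∑ j, P i j = 1)
    (I : Fin d → ℝ) (hI0 : ∀ i, 0 ≤ I i ∧ I i ≤ 1) (hI1 : ∑ i, I i = 1) :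
    ∃ T : ℕ, 0 < T ∧ T ∣ (Finset.Icc 1 d).lcm id ∧
      ∃ pi : ℕ → Fin d → ℝ,
        ∀ k < T,
          (∀ q, 0 ≤ pi k q ∧ pi k q ≤ 1) ∧
          Filter.Tendsto (fun n : ℕ => Matrix.vecMul I (P ^ k * (P ^ T) ^ n))
            Filter.atTop (nhds (pi k)) ∧
          (∀ q : Fin d, pi k q ≠ 0 ↔
            ((∀ r, Relation.ReflTransGen (fun i j => 0 < P i j) q r →
                Relation.ReflTransGen (fun i j => 0 < P i j) r q) ∧
             ∃ p, 0 < I p ∧ ∃ l ≤ d, pathLen (fun i j => 0 < P i j) (k + T * l) p q)) := by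
  classical
  open MCAux Filter Topology in
  rcases Nat.eq_zero_or_pos d with hd0 | hd
  · exfalso
    subst hd0
    simp at hI1
  have hP0' : ∀ i j, 0 ≤ P i j := fun i j => (hP0 i j).1
  have hI0' : ∀ i, 0 ≤ I i := fun i => (hI0 i).1
  have master : ∀ k : ℕ, ∀ q : Fin d, ∃ L : ℝ,
      Filter.Tendsto (fun n => X P I k n q) Filter.atTop (nhds L) ∧ 0 ≤ L ∧ L ≤ 1 ∧
      (L ≠ 0 ↔ (RecSt P q ∧
        ∃ p, 0 < I p ∧ ∃ l ≤ d, pathLen (Erel P) (k + Tper d * l) p q)) := by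
    intro k q
    by_cases hq : RecSt P q
    · obtain ⟨L, h1, h2, h3⟩ := recurrent_master hP0' hP1 hI0' hI1 hd hq
      refine ⟨L, h1, h2, ?_, ?_⟩
      · exact le_of_tendsto h1 (Filter.Eventually.of_forall fun n =>
          X_le_one hP0' hP1 hI0' hI1)
      · rw [h3]
        constructor
        · intro h; exact ⟨hq, h⟩
        · rintro ⟨-, h⟩; exact h
    · refine ⟨0, transient_tendsto hP0' hP1 hI0' hI1 hd hq, le_refl _, zero_le_one, ?_⟩
      constructor
      · intro h; exact absurd rfl h
      · rintro ⟨h, -⟩; exact absurd h hq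
  choose pi h1 h2 h3 h4 using master
  refine ⟨Tper d, Tper_pos, dvd_refl _, pi, ?_⟩
  intro k _
  refine ⟨fun q => ⟨h2 k q, h3 k q⟩, ?_, ?_⟩
  · rw [tendsto_pi_nhds]
    intro q
    exact h1 k q
  · intro q
    constructor
    · intro h
      exact (h4 k q).1 h
    · rintro ⟨ha, hb⟩
      exact (h4 k q).2 ⟨ha, hb⟩
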